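/- The morphed distance-three quantum Reed-Muller code QRM(d) (obtained by morphing one interior hyperoctahedron ball code) has exactly d logical Z operators of weight two. -/

import Mathlib

/-!
The morphed distance-three quantum Reed–Muller code `QRM(d)`, obtained by
morphing the interior hyperoctahedron ball code of the `[[2^{d+1}−1, 1, 3]]`
color-code representation of `QRM(d)`.

In coordinates: the parent `QRM(d)` code has qubits labelled by nonzero vectors
of `F₂^{d+1}`, X-stabilizers `{w : w_i = 1}` and Z-stabilizer group spanned by
the supports of the monomials of degree `≤ d − 1`.  Morphing the ball
`{w : w_{d+1} = 1}` gives the `[[2^d + d − 1, 1, 2]]` code whose qubits are the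
`2^d − 1` remaining simplex qubits, labelled by nonzero `w ∈ F₂^d`, plus `d`
edge qubits `ī`, with:
* X-stabilizers (for `i ∈ Fin d`): `X` on `{w : w_i = 1} ∪ {ī}`;
* Z-stabilizer group spanned by, for each nonempty `S ⊆ Fin d` with
  `|S| ≤ d − 1`: `Z` on `{w : w_S = 1}`, together with the edge qubit `k̄`
  (`{k} = complement of S`) when `|S| = d − 1`.
-/

/-- Simplex qubit labels. -/
abbrev Simp (d : ℕ) := {w : Fin d → ZMod 2 // w ≠ 0}

/-- Qubits of the morphed `QRM(d)` code: simplex qubits plus `d` edge qubits. -/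
abbrev MorQ (d : ℕ) := Simp d ⊕ Fin d

/-- The X-stabilizer generator associated with `i : Fin d`. -/
def morXcheck (d : ℕ) (i : Fin d) : MorQ d → ZMod 2
  | .inl w => if w.1 i = 1 then 1 else 0
  | .inr j => if j = i then 1 else 0

/-- The Z-stabilizer generator associated with a nonempty set `S ⊆ Fin d` of
cardinality `≤ d − 1`. -/
def morZgen (d : ℕ) (S : Finset (Fin d)) : MorQ d → ZMod 2
  | .inl w => if ∀ i ∈ S, w.1 i = 1 then 1 else 0
  | .inr j => if S.card = d - 1 ∧ j ∉ S then 1 else 0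

/-- The Z-stabilizer group (as an `F₂`-span). -/
def morZspan (d : ℕ) : Submodule (ZMod 2) (MorQ d → ZMod 2) :=
  Submodule.span (ZMod 2)
    {z | ∃ S : Finset (Fin d), S.Nonempty ∧ S.card ≤ d - 1 ∧ z = morZgen d S}

/-- `b` is a logical Z operator of weight two: a Z-type Pauli commuting with
all X-stabilizers, not in the Z-stabilizer group, of weight exactly two. -/
def IsWeightTwoLogicalZ (d : ℕ) (b : MorQ d → ZMod 2) : Prop :=
  (∀ i : Fin d, (∑ q, morXcheck d i q * b q) = 0) ∧
  b ∉ morZspan d ∧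
  (Finset.univ.filter fun q => b q ≠ 0).card = 2

/-! ### Auxiliary material -/

lemma zmod2_cases : ∀ a : ZMod 2, a = 0 ∨ a = 1 := by decide

lemma zmod2_add_eq_zero : ∀ {a b : ZMod 2}, a + b = 0 → a = b := by decide

lemma zmod2_add_self : ∀ a : ZMod 2, a + a = 0 := by decide

lemma zmod2_ne_zero {a : ZMod 2} (h : a ≠ 0) : a = 1 := by
  rcases zmod2_cases a with h0 | h1
  · exact absurd h0 h
  · exact h1

lemma zmod2_cancel {a : ZMod 2} (h : a + 1 = a) : False := by
  have h2 : a + 1 = a + 0 := by rw [add_zero]; exact h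
  exact one_ne_zero (add_left_cancel h2)

/-- The distinguished simplex qubit `e_j`. -/
def ejv (d : ℕ) (j : Fin d) : Simp d :=
  ⟨Pi.single j 1, by
    intro h
    have := congrFun h j
    simp [Pi.single_eq_same] at this⟩

/-- The candidate weight-two logical: support `{inl e_j, inr j}`. -/
def bvec (d : ℕ) (j : Fin d) : MorQ d → ZMod 2 :=
  fun q => if q = Sum.inl (ejv d j) ∨ q = Sum.inr j then 1 else 0

/-- Parity over all simplex qubits, as a linear functional. -/
def phi (d : ℕ) : (MorQ d → ZMod 2) →ₗ[ZMod 2] ZMod 2 where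
  toFun b := ∑ w : Simp d, b (Sum.inl w)
  map_add' b c := by simp [Finset.sum_add_distrib]
  map_smul' r b := by simp [Finset.mul_sum]

lemma phi_gen (d : ℕ) (S : Finset (Fin d)) (hS : S.Nonempty)
    (hcard : S.card < d) : phi d (morZgen d S) = 0 := by
  classical
  obtain ⟨i0, hi0⟩ : ∃ i0, i0 ∉ S := by
    by_contra h
    push_neg at h
    have hsub : (Finset.univ : Finset (Fin d)) ⊆ S := fun i _ => h i
    have := Finset.card_le_card hsub
    simp only [Finset.card_univ, Fintype.card_fin] at this
    omega
  show (∑ w : Simp d, morZgen d S (Sum.inl w)) = 0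
  have key : ∀ w : Simp d, w.1 = Pi.single i0 1 → morZgen d S (Sum.inl w) = 0 := by
    intro w hw
    obtain ⟨i1, hi1⟩ := hS
    have hne : i1 ≠ i0 := fun h => hi0 (h ▸ hi1)
    simp only [morZgen, ite_eq_right_iff]
    intro hall
    have h1 := hall i1 hi1
    rw [hw, Pi.single_eq_of_ne hne] at h1
    exact absurd h1 zero_ne_one
  refine Finset.sum_involution
    (fun w _ => if h : w.1 = Pi.single i0 1 then w else
      ⟨w.1 + Pi.single i0 (1 : ZMod 2), ?_⟩) ?_ ?_ (fun w hw => Finset.mem_univ _) ?_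
  · intro h0
    apply h
    funext i
    exact zmod2_add_eq_zero (congrFun h0 i)
  · intro w _
    by_cases h : w.1 = Pi.single i0 1
    · simp only [dif_pos h]
      rw [key w h]
      simp
    · simp only [dif_neg h]
      have hcond : (∀ i ∈ S, w.1 i = 1) ↔
          (∀ i ∈ S, (w.1 + (Pi.single i0 1 : Fin d → ZMod 2)) i = 1) := by
        refine forall₂_congr fun i hi => ?_
        have hne : i ≠ i0 := fun h' => hi0 (h' ▸ hi)
        simp [Pi.single_eq_of_ne hne]
      simp only [morZgen]
      by_cases hc : ∀ i ∈ S, w.1 i = 1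
      · rw [if_pos hc, if_pos (hcond.mp hc)]; exact zmod2_add_self 1
      · rw [if_neg hc, if_neg (fun h' => hc (hcond.mpr h'))]; exact zmod2_add_self 0
  · intro w _ hne
    by_cases h : w.1 = Pi.single i0 1
    · exact absurd (key w h) hne
    · simp only [dif_neg h]
      intro heq
      have h1 := congrFun (congrArg Subtype.val heq) i0
      simp only [Pi.add_apply, Pi.single_eq_same] at h1
      exact zmod2_cancel h1
  · intro w _
    by_cases h : w.1 = Pi.single i0 1
    · simp [h]
    · have h2 : (w.1 + Pi.single i0 (1 : ZMod 2)) ≠ Pi.single i0 1 := by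
        intro heq
        apply w.2
        funext i
        have h3 := congrFun heq i
        by_cases hi : i = i0
        · subst hi
          simp only [Pi.add_apply, Pi.single_eq_same] at h3 ⊢
          rcases zmod2_cases (w.1 i) with h0 | h1
          · exact h0
          · rw [h1] at h3
            rw [zmod2_add_self] at h3
            exact absurd h3.symm one_ne_zero
        · simp only [Pi.add_apply, Pi.single_eq_of_ne hi, add_zero] at h3
          exact h3
      simp only [dif_neg h]
      simp only [dif_neg h2]
      apply Subtype.ext
      show w.1 + (Pi.single i0 1 : Fin d → ZMod 2) + Pi.single i0 1 = w.1
      rw [add_assoc]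
      have hz : (Pi.single i0 1 : Fin d → ZMod 2) + Pi.single i0 1 = 0 := by
        funext i; exact zmod2_add_self _
      rw [hz, add_zero]

lemma phi_bvec (d : ℕ) (j : Fin d) : phi d (bvec d j) = 1 := by
  classical
  show (∑ w : Simp d, bvec d j (Sum.inl w)) = 1
  have h : ∀ w : Simp d, bvec d j (Sum.inl w) = if w = ejv d j then 1 else 0 := by
    intro w
    simp only [bvec]
    congr 1
    simp only [eq_iff_iff]
    constructor
    · rintro (h | h)
      · exact Sum.inl.inj h
      · exact absurd h (by simp)
    · intro h; exact Or.inl (by rw [h])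
  rw [Finset.sum_congr rfl (fun w _ => h w)]
  simp

lemma bvec_not_mem (d : ℕ) (j : Fin d) : bvec d j ∉ morZspan d := by
  intro hmem
  have hker : morZspan d ≤ LinearMap.ker (phi d) := by
    rw [morZspan, Submodule.span_le]
    rintro z ⟨S, hne, hc, rfl⟩
    have hlt : S.card < d := by
      have hd1 : 1 ≤ d := by
        rcases Nat.eq_zero_or_pos d with h0 | h1
        · subst h0; exact absurd (Finset.eq_empty_of_isEmpty S ▸ hne) (by simp)
        · exact h1
      omega
    exact phi_gen d S hne hlt
  have := hker hmem
  rw [LinearMap.mem_ker, phi_bvec] at this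
  exact one_ne_zero this

lemma bvec_isLogical (d : ℕ) (j : Fin d) : IsWeightTwoLogicalZ d (bvec d j) := by
  classical
  refine ⟨?_, bvec_not_mem d j, ?_⟩
  · intro i
    have hsupp : ∀ q : MorQ d, q ∉ ({Sum.inl (ejv d j), Sum.inr j} : Finset (MorQ d)) →
        morXcheck d i q * bvec d j q = 0 := by
      intro q hq
      simp only [Finset.mem_insert, Finset.mem_singleton] at hq
      push_neg at hq
      have hz : bvec d j q = 0 := by
        simp only [bvec, if_neg (by tauto : ¬(q = Sum.inl (ejv d j) ∨ q = Sum.inr j))]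
      rw [hz, mul_zero]
    rw [← Finset.sum_subset (Finset.subset_univ _) (fun q _ hq => hsupp q hq)]
    have hne : (Sum.inl (ejv d j) : MorQ d) ≠ Sum.inr j := by simp
    rw [Finset.sum_pair hne]
    have h1 : bvec d j (Sum.inl (ejv d j)) = 1 := by simp [bvec]
    have h2 : bvec d j (Sum.inr j) = 1 := by simp [bvec]
    rw [h1, h2, mul_one, mul_one]
    show (if (ejv d j).1 i = 1 then (1:ZMod 2) else 0) + (if j = i then 1 else 0) = 0
    by_cases hij : i = j
    · subst hij
      rw [show (ejv d i).1 i = 1 from Pi.single_eq_same i 1, if_pos rfl, if_pos rfl]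
      exact zmod2_add_self 1
    · rw [show (ejv d j).1 i = 0 from Pi.single_eq_of_ne hij 1,
        if_neg (by exact zero_ne_one), if_neg (fun h => hij h.symm)]
      exact zmod2_add_self 0
  · have hset : (Finset.univ.filter fun q => bvec d j q ≠ 0) =
        {Sum.inl (ejv d j), Sum.inr j} := by
      ext q
      simp only [Finset.mem_filter, Finset.mem_univ, true_and, Finset.mem_insert,
        Finset.mem_singleton]
      simp only [bvec]
      constructor
      · intro h
        by_contra hc
        push_neg at hc
        rw [if_neg (by tauto : ¬(q = Sum.inl (ejv d j) ∨ q = Sum.inr j))] at h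
        exact h rfl
      · rintro (h | h) <;> · rw [if_pos (by tauto)]; exact one_ne_zero
    rw [hset]
    exact Finset.card_pair (by simp)

lemma logical_char (d : ℕ) (b : MorQ d → ZMod 2)
    (hlog : IsWeightTwoLogicalZ d b) : ∃ j : Fin d, b = bvec d j := by
  classical
  obtain ⟨hcomm, _, hcard⟩ := hlog
  obtain ⟨q1, q2, hq12, hset⟩ := Finset.card_eq_two.mp hcard
  have hmem : ∀ q, b q ≠ 0 ↔ q = q1 ∨ q = q2 := by
    intro q
    rw [show (b q ≠ 0) ↔ q ∈ Finset.univ.filter (fun q => b q ≠ 0) by simp, hset]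
    simp
  have hb : ∀ q, b q = if q = q1 ∨ q = q2 then 1 else 0 := by
    intro q
    by_cases h : q = q1 ∨ q = q2
    · rw [if_pos h]; exact zmod2_ne_zero ((hmem q).mpr h)
    · rw [if_neg h]
      by_contra hc
      exact h ((hmem q).mp hc)
  have hsum : ∀ i, morXcheck d i q1 + morXcheck d i q2 = 0 := by
    intro i
    have hthis := hcomm i
    have hsupp : ∀ q : MorQ d, q ∉ ({q1, q2} : Finset (MorQ d)) →
        morXcheck d i q * b q = 0 := by
      intro q hq
      simp only [Finset.mem_insert, Finset.mem_singleton] at hq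
      push_neg at hq
      rw [hb q, if_neg (by tauto), mul_zero]
    rw [← Finset.sum_subset (Finset.subset_univ _) (fun q _ hq => hsupp q hq),
      Finset.sum_pair hq12] at hthis
    rw [hb q1, hb q2, if_pos (Or.inl rfl), if_pos (Or.inr rfl), mul_one, mul_one] at hthis
    exact hthis
  -- key fact: a pair (inl w, inr j) satisfying the commutation rule forces w = e_j
  have keylr : ∀ (w : Simp d) (j : Fin d),
      (∀ i, morXcheck d i (Sum.inl w) + morXcheck d i (Sum.inr j) = 0) → w = ejv d j := by
    intro w j hs
    apply Subtype.ext
    funext i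
    have heq := zmod2_add_eq_zero (hs i)
    simp only [morXcheck] at heq
    show w.1 i = (Pi.single j 1 : Fin d → ZMod 2) i
    by_cases hij : i = j
    · subst hij
      rw [Pi.single_eq_same]
      rw [if_pos rfl] at heq
      by_cases hc : w.1 i = 1
      · exact hc
      · rw [if_neg hc] at heq; exact absurd heq.symm one_ne_zero
    · rw [Pi.single_eq_of_ne hij]
      rw [if_neg (fun h : j = i => hij h.symm)] at heq
      by_cases hc : w.1 i = 1
      · rw [if_pos hc] at heq; exact absurd heq one_ne_zero
      · rcases zmod2_cases (w.1 i) with h0 | h1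
        · exact h0
        · exact absurd h1 hc
  rcases q1 with w1 | j1 <;> rcases q2 with w2 | j2
  · -- inl, inl : impossible
    exfalso
    apply hq12
    congr 1
    apply Subtype.ext
    funext i
    have heq := zmod2_add_eq_zero (hsum i)
    simp only [morXcheck] at heq
    by_cases hc1 : w1.1 i = 1
    · rw [if_pos hc1] at heq
      by_cases hc2 : w2.1 i = 1
      · rw [hc1, hc2]
      · rw [if_neg hc2] at heq; exact absurd heq one_ne_zero
    · rw [if_neg hc1] at heq
      by_cases hc2 : w2.1 i = 1
      · rw [if_pos hc2] at heq; exact absurd heq.symm one_ne_zero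
      · rcases zmod2_cases (w1.1 i) with h1' | h1'
        · rcases zmod2_cases (w2.1 i) with h2' | h2'
          · rw [h1', h2']
          · exact absurd h2' hc2
        · exact absurd h1' hc1
  · -- inl w1, inr j2
    refine ⟨j2, ?_⟩
    have hw : w1 = ejv d j2 := keylr w1 j2 hsum
    funext q
    rw [hb q, hw]
    simp only [bvec]
  · -- inr j1, inl w2
    refine ⟨j1, ?_⟩
    have hw : w2 = ejv d j1 := by
      apply keylr w2 j1
      intro i
      rw [add_comm]
      exact hsum i
    funext q
    rw [hb q, hw]
    simp only [bvec]
    by_cases hq : q = Sum.inr j1 ∨ q = Sum.inl (ejv d j1)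
    · rw [if_pos hq, if_pos hq.symm]
    · rw [if_neg hq, if_neg (fun h => hq h.symm)]
  · -- inr, inr : impossible
    exfalso
    have hne : j1 ≠ j2 := fun h => hq12 (by rw [h])
    have heq := hsum j1
    simp only [morXcheck, if_pos rfl, if_neg (fun h : j2 = j1 => hne h.symm)] at heq
    rw [add_zero] at heq
    exact one_ne_zero heq

/-- The morphed distance-three quantum Reed–Muller code
`QRM(d)` has exactly `d` logical Z operators of weight two. -/
theorem morphed_QRM_weight_two_logicals (d : ℕ) (hd : 2 ≤ d) :
    Nat.card {b : MorQ d → ZMod 2 // IsWeightTwoLogicalZ d b} = d := by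
  have e : Fin d ≃ {b : MorQ d → ZMod 2 // IsWeightTwoLogicalZ d b} := by
    refine Equiv.ofBijective (fun j => ⟨bvec d j, bvec_isLogical d j⟩) ⟨?_, ?_⟩
    · intro j k h
      by_contra hc
      have heq : bvec d j = bvec d k := congrArg Subtype.val h
      have hval := congrFun heq (Sum.inr j)
      have h1 : bvec d j (Sum.inr j) = 1 := if_pos (Or.inr rfl)
      have h2 : bvec d k (Sum.inr j) = 0 := by
        apply if_neg
        rintro (h' | h')
        · exact nomatch h'
        · exact hc (Sum.inr.inj h')
      rw [h1, h2] at hval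
      exact one_ne_zero hval
    · rintro ⟨b, hb⟩
      obtain ⟨j, rfl⟩ := logical_char d b hb
      exact ⟨j, rfl⟩
  rw [Nat.card_congr e.symm, Nat.card_eq_fintype_card, Fintype.card_fin]
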